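/- Let f : ℝ^p → ℝ be twice continuously differentiable with m·I ⪯ ∇²f(θ) ⪯ M·I for all θ (0 < m ≤ M). Let θ ∈ ℝ^p, and suppose g(θ) ∈ ℝ^p and H(θ) ∈ ℝ^{p×p} satisfy ‖g(θ) − ∇f(θ)‖₂ ≤ γ_g and ‖H(θ) − ∇²f(θ)‖₂ ≤ γ_h ≤ m/2. Set Δθ_nt = −H(θ)⁻¹g(θ) and λ̃(θ)² = g(θ)ᵀH(θ)⁻¹g(θ), and suppose γ_g·√(2/m) ≤ λ̃(θ)/2. Then for every α ≥ 0: f(θ + α·Δθ_nt) ≤ f(θ) − λ̃(θ)²·α·(1/2 − (M/m)·α). In particular, for any κ₁ ∈ (0, 1/2) and any 0 ≤ α ≤ (m/M)·(1/2 − κ₁), one has f(θ + α·Δθ_nt) ≤ f(θ) − κ₁·α·λ̃(θ)². -/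

import Mathlib

open scoped RealInnerProductSpace

private lemma taylor_aux (φ ψ ψ' : ℝ → ℝ) (C : ℝ)
    (hφ : ∀ t, HasDerivAt φ (ψ t) t)
    (hψ : ∀ t, HasDerivAt ψ (ψ' t) t)
    (hC : ∀ t, ψ' t ≤ C) {a : ℝ} (ha : 0 ≤ a) :
    φ a ≤ φ 0 + a * ψ 0 + C / 2 * a ^ 2 := by
  have hstep : ∀ t : ℝ, 0 ≤ t → ψ t ≤ ψ 0 + C * t := by
    intro t ht
    have hud : ∀ s : ℝ, HasDerivAt (fun s => ψ 0 + (C * s - ψ s)) (C - ψ' s) s := by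
      intro s
      have h1 : HasDerivAt (fun s : ℝ => C * s) C s := by
        simpa using (hasDerivAt_id s).const_mul C
      exact ((h1.sub (hψ s)).const_add (ψ 0))
    have hmono : Monotone (fun s => ψ 0 + (C * s - ψ s)) :=
      monotone_of_deriv_nonneg (fun s => (hud s).differentiableAt)
        (fun s => by rw [(hud s).deriv]; linarith [hC s])
    have := hmono ht
    simp only at this
    linarith
  have hvd : ∀ s : ℝ, HasDerivAt (fun t => φ 0 + t * ψ 0 + C / 2 * t ^ 2 - φ t)
      (ψ 0 + C * s - ψ s) s := by
    intro s
    have h1 : HasDerivAt (fun t : ℝ => φ 0 + t * ψ 0 + C / 2 * t ^ 2) (ψ 0 + C * s) s := by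
      have h2 := ((hasDerivAt_id s).mul_const (ψ 0)).const_add (φ 0)
      have h3 := (hasDerivAt_pow 2 s).const_mul (C / 2)
      have h4 := h2.add h3
      convert h4 using 1
      · rfl
      · rfl
      · rfl
      · rw [show (2:ℕ) - 1 = 1 from rfl]
        push_cast
        ring
    exact h1.sub (hφ s)
  have hdiffv : Differentiable ℝ (fun t => φ 0 + t * ψ 0 + C / 2 * t ^ 2 - φ t) :=
    fun s => (hvd s).differentiableAt
  have hmono : MonotoneOn (fun t => φ 0 + t * ψ 0 + C / 2 * t ^ 2 - φ t) (Set.Ici 0) := by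
    apply monotoneOn_of_deriv_nonneg (convex_Ici 0) hdiffv.continuous.continuousOn
      hdiffv.differentiableOn
    intro x hx
    rw [interior_Ici] at hx
    rw [(hvd x).deriv]
    linarith [hstep x (le_of_lt hx)]
  have := hmono (Set.self_mem_Ici) (Set.mem_Ici.mpr ha) ha
  simp only at this
  nlinarith [this]

/-- The Hessian of `f`, as the Fréchet derivative of the gradient. -/
noncomputable def hessianOf {p : ℕ} (f : EuclideanSpace ℝ (Fin p) → ℝ)
    (θ : EuclideanSpace ℝ (Fin p)) :
    EuclideanSpace ℝ (Fin p) →L[ℝ] EuclideanSpace ℝ (Fin p) :=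
  fderiv ℝ (gradient f) θ

set_option maxHeartbeats 1000000 in
/-- sufficient decrease of `f` along the noisy Newton direction for any
stepsize, and in particular for stepsizes below the backtracking threshold. -/
theorem noisy_newton_sufficient_decrease {p : ℕ} (f : EuclideanSpace ℝ (Fin p) → ℝ)
    (m M γg γh : ℝ) (hm : 0 < m) (hmM : m ≤ M)
    (hf : ContDiff ℝ 2 f)
    (hconv : ∀ θ' v : EuclideanSpace ℝ (Fin p), m * ‖v‖ ^ 2 ≤ ⟪hessianOf f θ' v, v⟫)
    (hsmooth : ∀ θ' v : EuclideanSpace ℝ (Fin p), ⟪hessianOf f θ' v, v⟫ ≤ M * ‖v‖ ^ 2)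
    (θ : EuclideanSpace ℝ (Fin p))
    (g : EuclideanSpace ℝ (Fin p))
    (H : EuclideanSpace ℝ (Fin p) →L[ℝ] EuclideanSpace ℝ (Fin p))
    (hg : ‖g - gradient f θ‖ ≤ γg) (hH : ‖H - hessianOf f θ‖ ≤ γh)
    (hγhm : γh ≤ m / 2)
    (Δ : EuclideanSpace ℝ (Fin p)) (hΔ : Δ = -(H.inverse g))
    (lam2 : ℝ) (hlam2 : lam2 = ⟪g, H.inverse g⟫)
    (hγg : γg * Real.sqrt (2 / m) ≤ Real.sqrt lam2 / 2) :
    (∀ α : ℝ, 0 ≤ α →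
      f (θ + α • Δ) ≤ f θ - lam2 * α * (1 / 2 - M / m * α)) ∧
    (∀ κ₁ ∈ Set.Ioo (0 : ℝ) (1 / 2), ∀ α : ℝ, 0 ≤ α → α ≤ m / M * (1 / 2 - κ₁) →
      f (θ + α • Δ) ≤ f θ - κ₁ * α * lam2) := by
  have hM : 0 < M := lt_of_lt_of_le hm hmM
  have hdiff : Differentiable ℝ f := hf.differentiable (by norm_num)
  have hgradinner : ∀ x v : EuclideanSpace ℝ (Fin p), ⟪gradient f x, v⟫ = fderiv ℝ f x v :=
    fun x v => InnerProductSpace.toDual_symm_apply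
  have hgd : Differentiable ℝ (gradient f) := by
    have h1 : ContDiff ℝ 1 (fderiv ℝ f) := hf.fderiv_right (by norm_num)
    exact ((InnerProductSpace.toDual ℝ
        (EuclideanSpace ℝ (Fin p))).symm.toContinuousLinearEquiv.toContinuousLinearMap.differentiable).comp
      (h1.differentiable (by norm_num))
  have hγh0 : (0:ℝ) ≤ γh := le_trans (norm_nonneg _) hH
  have hγg0 : (0:ℝ) ≤ γg := le_trans (norm_nonneg _) hg
  -- coercivity of H
  have hHpos : ∀ v : EuclideanSpace ℝ (Fin p), m / 2 * ‖v‖ ^ 2 ≤ ⟪H v, v⟫ := by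
    intro v
    have h1 := hconv θ v
    have h2 : ‖(H - hessianOf f θ) v‖ ≤ γh * ‖v‖ :=
      le_trans ((H - hessianOf f θ).le_opNorm v)
        (mul_le_mul_of_nonneg_right hH (norm_nonneg v))
    have h3 : |⟪(H - hessianOf f θ) v, v⟫| ≤ γh * ‖v‖ * ‖v‖ :=
      le_trans (abs_real_inner_le_norm _ _) (mul_le_mul_of_nonneg_right h2 (norm_nonneg v))
    have h4 : ⟪H v, v⟫ = ⟪hessianOf f θ v, v⟫ + ⟪(H - hessianOf f θ) v, v⟫ := by
      simp [ContinuousLinearMap.sub_apply, inner_sub_left]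
    have h5 := (abs_le.mp h3).1
    have h6 : ‖v‖ * ‖v‖ = ‖v‖ ^ 2 := by ring
    nlinarith [sq_nonneg ‖v‖]
  -- H is invertible
  have hinj : Function.Injective H := by
    intro a b hab
    have h0 : H (a - b) = 0 := by rw [map_sub, hab, sub_self]
    have h1 := hHpos (a - b)
    rw [h0, inner_zero_left] at h1
    have h2 : ‖a - b‖ ^ 2 ≤ 0 := by nlinarith
    have h3 : ‖a - b‖ = 0 := by nlinarith [sq_nonneg ‖a - b‖, norm_nonneg (a - b)]
    exact sub_eq_zero.mp (norm_eq_zero.mp h3)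
  have hsurj : Function.Surjective H.toLinearMap :=
    LinearMap.injective_iff_surjective.mp hinj
  let eL : EuclideanSpace ℝ (Fin p) ≃ₗ[ℝ] EuclideanSpace ℝ (Fin p) :=
    LinearEquiv.ofBijective H.toLinearMap ⟨hinj, hsurj⟩
  let eC : EuclideanSpace ℝ (Fin p) ≃L[ℝ] EuclideanSpace ℝ (Fin p) :=
    eL.toContinuousLinearEquiv
  have heC : (eC : EuclideanSpace ℝ (Fin p) →L[ℝ] EuclideanSpace ℝ (Fin p)) = H := by
    ext v; rfl
  have hHinv : H (H.inverse g) = g := by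
    rw [← heC, ContinuousLinearMap.inverse_equiv]
    simp
  obtain ⟨u, hu⟩ : ∃ u, u = H.inverse g := ⟨_, rfl⟩
  rw [← hu] at hΔ hlam2 hHinv
  clear heC hinj hsurj eC eL hu
  -- basic estimates
  have hlampos : m / 2 * ‖u‖ ^ 2 ≤ lam2 := by
    rw [hlam2]
    have := hHpos u
    rwa [hHinv] at this
  have hlam0 : 0 ≤ lam2 := le_trans (by positivity) hlampos
  have hu2 : ‖u‖ ^ 2 ≤ 2 / m * lam2 := by
    rw [div_mul_eq_mul_div, le_div_iff₀ hm]; nlinarith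
  have hnormu : ‖u‖ ≤ Real.sqrt (2 / m) * Real.sqrt lam2 := by
    have h1 : ‖u‖ = Real.sqrt (‖u‖ ^ 2) := (Real.sqrt_sq (norm_nonneg u)).symm
    rw [h1, ← Real.sqrt_mul (by positivity : (0:ℝ) ≤ 2 / m) lam2]
    exact Real.sqrt_le_sqrt hu2
  have hnormΔ : ‖Δ‖ = ‖u‖ := by rw [hΔ, norm_neg]
  have hpsi0 : ⟪gradient f θ, Δ⟫ ≤ -lam2 / 2 := by
    have h1 : ⟪g, Δ⟫ = -lam2 := by rw [hΔ, inner_neg_right, hlam2]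
    have h2 : ⟪gradient f θ, Δ⟫ = ⟪g, Δ⟫ + ⟪gradient f θ - g, Δ⟫ := by
      rw [inner_sub_left]; ring
    have h3 : ⟪gradient f θ - g, Δ⟫ ≤ γg * ‖u‖ := by
      calc ⟪gradient f θ - g, Δ⟫ ≤ ‖gradient f θ - g‖ * ‖Δ‖ := real_inner_le_norm _ _
        _ ≤ γg * ‖u‖ := by
            rw [hnormΔ]
            exact mul_le_mul_of_nonneg_right (by rwa [norm_sub_rev] at hg) (norm_nonneg u)
    have h4 : γg * ‖u‖ ≤ lam2 / 2 := by
      calc γg * ‖u‖ ≤ γg * (Real.sqrt (2 / m) * Real.sqrt lam2) :=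
            mul_le_mul_of_nonneg_left hnormu hγg0
        _ = γg * Real.sqrt (2 / m) * Real.sqrt lam2 := by ring
        _ ≤ Real.sqrt lam2 / 2 * Real.sqrt lam2 :=
            mul_le_mul_of_nonneg_right hγg (Real.sqrt_nonneg _)
        _ = lam2 / 2 := by
            rw [div_mul_eq_mul_div, Real.mul_self_sqrt hlam0]
    linarith
  -- derivatives along the line
  have hc : ∀ α : ℝ, HasDerivAt (fun t : ℝ => θ + t • Δ) Δ α := by
    intro α
    simpa using ((hasDerivAt_id α).smul_const Δ).const_add θ
  have hderiv1 : ∀ α : ℝ, HasDerivAt (fun t => f (θ + t • Δ))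
      ⟪gradient f (θ + α • Δ), Δ⟫ α := by
    intro α
    have h1 := (hdiff (θ + α • Δ)).hasFDerivAt.comp_hasDerivAt α (hc α)
    rw [hgradinner]
    exact h1
  have hderiv2 : ∀ α : ℝ, HasDerivAt (fun t => ⟪gradient f (θ + t • Δ), Δ⟫)
      ⟪hessianOf f (θ + α • Δ) Δ, Δ⟫ α := by
    intro α
    have hG : HasFDerivAt (gradient f) (hessianOf f (θ + α • Δ)) (θ + α • Δ) :=
      (hgd (θ + α • Δ)).hasFDerivAt
    have h1 : HasDerivAt (fun t : ℝ => gradient f (θ + t • Δ))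
        (hessianOf f (θ + α • Δ) Δ) α := by have := hG.comp_hasDerivAt α (hc α); exact this
    have h2 := h1.inner ℝ (hasDerivAt_const α Δ)
    simpa using h2
  have part1 : ∀ α : ℝ, 0 ≤ α →
      f (θ + α • Δ) ≤ f θ - lam2 * α * (1 / 2 - M / m * α) := by
    intro α hα
    have key := taylor_aux (fun t => f (θ + t • Δ))
      (fun t => ⟪gradient f (θ + t • Δ), Δ⟫)
      (fun t => ⟪hessianOf f (θ + t • Δ) Δ, Δ⟫) (M * ‖Δ‖ ^ 2)
      hderiv1 hderiv2 (fun t => hsmooth _ Δ) hα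
    simp only [zero_smul, add_zero] at key
    have hA : α * ⟪gradient f θ, Δ⟫ ≤ α * (-lam2 / 2) :=
      mul_le_mul_of_nonneg_left hpsi0 hα
    have hB : M * ‖Δ‖ ^ 2 / 2 * α ^ 2 ≤ M / m * lam2 * α ^ 2 := by
      have h7 : M * ‖Δ‖ ^ 2 ≤ M / m * (2 * lam2) := by
        rw [hnormΔ]
        calc M * ‖u‖ ^ 2 = M / m * (m * ‖u‖ ^ 2) := by field_simp
          _ ≤ M / m * (2 * lam2) := by
              apply mul_le_mul_of_nonneg_left _ (le_of_lt (div_pos hM hm))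
              nlinarith
      nlinarith [sq_nonneg α]
    have hexp : f θ - lam2 * α * (1 / 2 - M / m * α)
        = f θ + α * (-lam2 / 2) + M / m * lam2 * α ^ 2 := by ring
    rw [hexp]
    linarith
  refine ⟨part1, ?_⟩
  intro κ hκ α hα hle
  have h2 : M / m * α ≤ 1 / 2 - κ := by
    have h3 := mul_le_mul_of_nonneg_left hle (le_of_lt (div_pos hM hm))
    have h4 : M / m * (m / M * (1 / 2 - κ)) = 1 / 2 - κ := by field_simp
    linarith
  have h5 : 0 ≤ lam2 * α := mul_nonneg hlam0 hα
  have h6 : κ * α * lam2 ≤ lam2 * α * (1 / 2 - M / m * α) := by nlinarith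
  linarith [part1 α hα]
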